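/- For pairs (R, R') with 0 < R < R' < 1 define F(R,R') = ∫_R^{R'} log(R'/r) · r/(1 − r²)² dr and G(R,R') = (1/4) ∫_R^{R'} (R' − r)/(1 − r)² dr. Then F ∼ G: for every ε > 0 there exists δ > 0 such that |F(R,R')/G(R,R') − 1| < ε whenever 1 − δ < R < R' < 1. -/

import Mathlib

open intervalIntegral

set_option maxHeartbeats 1000000 in
lemma second_term_sim_aux {δ ε' R R' : ℝ} (hδpos : 0 < δ) (hδ1 : δ ≤ 1/8)
    (hδε' : δ ≤ ε') (h4δ : 4 * δ ≤ ε') (hε'le : ε' ≤ 1/2) (hε'pos : 0 < ε')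
    (hR : 1 - δ < R) (hRR' : R < R') (hR'1 : R' < 1) (hR0 : 0 < R) :
    ∀ r ∈ Set.Icc R R',
      (1 - ε') / 4 * ((R' - r) / (1 - r) ^ 2) ≤ Real.log (R' / r) * (r / (1 - r ^ 2) ^ 2) ∧
      Real.log (R' / r) * (r / (1 - r ^ 2) ^ 2) ≤ (1 + ε') / 4 * ((R' - r) / (1 - r) ^ 2) := by
  have hR'0 : 0 < R' := lt_trans hR0 hRR'
  intro r hr
  have hr0 : 0 < r := lt_of_lt_of_le hR0 hr.1
  have hrR' : r ≤ R' := hr.2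
  have hr1 : r < 1 := lt_of_le_of_lt hrR' hR'1
  have hrδ : 1 - δ < r := lt_of_lt_of_le hR hr.1
  have h1r : (0:ℝ) < 1 - r := by linarith
  have hRrnn : (0:ℝ) ≤ R' - r := by linarith
  have hfrac : (0:ℝ) ≤ r / (1 - r ^ 2) ^ 2 := by
    have : (0:ℝ) < 1 - r ^ 2 := by nlinarith
    positivity
  -- log bounds
  have hlogup : Real.log (R' / r) ≤ (R' - r) / r := by
    have h := Real.log_le_sub_one_of_pos (show 0 < R' / r by positivity)
    rwa [div_sub_one (ne_of_gt hr0)] at h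
  have hlogdn : (R' - r) / R' ≤ Real.log (R' / r) := by
    have h := Real.log_le_sub_one_of_pos (show 0 < r / R' by positivity)
    have h2 : Real.log (R' / r) = -Real.log (r / R') := by
      rw [← Real.log_inv, inv_div]
    rw [h2]
    rw [div_sub_one (ne_of_gt hR'0)] at h
    have h3 : (R' - r) / R' = -((r - R') / R') := by ring
    rw [h3]
    exact neg_le_neg h
  -- key polynomial facts
  have hδ2 : δ ^ 2 ≤ ε' := by nlinarith
  have h4 : (4:ℝ) ≤ (1 + ε') * (1 + r) ^ 2 := by
    have ha : (2 - δ) ^ 2 ≤ (1 + r) ^ 2 := by nlinarith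
    have hb : (1 + ε') * (2 - δ) ^ 2 ≤ (1 + ε') * (1 + r) ^ 2 :=
      mul_le_mul_of_nonneg_left ha (by linarith)
    have hc : (4:ℝ) ≤ (1 + ε') * (2 - δ) ^ 2 := by
      nlinarith [mul_nonneg (by linarith : (0:ℝ) ≤ ε' - 4 * δ) (sq_nonneg (2 - δ)),
        mul_nonneg hδpos.le (mul_nonneg hδpos.le hδpos.le)]
    linarith
  have h4' : (1 - ε') * R' * (1 + r) ^ 2 ≤ 4 * r := by
    have hs1 : (1 - ε') * R' * (1 + r) ^ 2 ≤ (1 - ε') * (1 + r) ^ 2 := by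
      nlinarith [mul_nonneg (mul_nonneg (by linarith : (0:ℝ) ≤ 1 - ε')
        (by linarith : (0:ℝ) ≤ 1 - R')) (sq_nonneg (1 + r))]
    have ha : (1 - r) ^ 2 ≤ δ ^ 2 := by nlinarith
    have hc : ε' ≤ ε' * (1 + r) ^ 2 := by nlinarith [hε'pos.le]
    nlinarith [ha, hδ2, hc, hs1]
  constructor
  · calc (1 - ε') / 4 * ((R' - r) / (1 - r) ^ 2)
        ≤ (R' - r) / R' * (r / (1 - r ^ 2) ^ 2) := by
          rw [← sub_nonneg]
          have heq : (R' - r) / R' * (r / (1 - r ^ 2) ^ 2)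
              - (1 - ε') / 4 * ((R' - r) / (1 - r) ^ 2)
              = ((R' - r) * (4 * r - (1 - ε') * R' * (1 + r) ^ 2))
                / (4 * R' * (1 - r) ^ 2 * (1 + r) ^ 2) := by
            have h1 : (1:ℝ) - r ^ 2 = (1 - r) * (1 + r) := by ring
            rw [h1]
            field_simp
          rw [heq]
          apply div_nonneg
          · exact mul_nonneg hRrnn (by linarith)
          · positivity
    _ ≤ Real.log (R' / r) * (r / (1 - r ^ 2) ^ 2) :=
          mul_le_mul_of_nonneg_right hlogdn hfrac
  · calc Real.log (R' / r) * (r / (1 - r ^ 2) ^ 2)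
        ≤ (R' - r) / r * (r / (1 - r ^ 2) ^ 2) :=
          mul_le_mul_of_nonneg_right hlogup hfrac
    _ ≤ (1 + ε') / 4 * ((R' - r) / (1 - r) ^ 2) := by
          rw [← sub_nonneg]
          have heq : (1 + ε') / 4 * ((R' - r) / (1 - r) ^ 2)
              - (R' - r) / r * (r / (1 - r ^ 2) ^ 2)
              = ((R' - r) * ((1 + ε') * (1 + r) ^ 2 - 4))
                / (4 * (1 - r) ^ 2 * (1 + r) ^ 2) := by
            have h1 : (1:ℝ) - r ^ 2 = (1 - r) * (1 + r) := by ring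
            rw [h1]
            field_simp
          rw [heq]
          apply div_nonneg
          · exact mul_nonneg hRrnn (by linarith)
          · positivity


set_option maxHeartbeats 1000000 in
theorem second_term_sim :
    ∀ ε > (0 : ℝ), ∃ δ > (0 : ℝ), ∀ R R' : ℝ,
      1 - δ < R → R < R' → R' < 1 → 0 < R →
      |(∫ r in R..R', Real.log (R' / r) * (r / (1 - r ^ 2) ^ 2)) /
          ((1 / 4) * ∫ r in R..R', (R' - r) / (1 - r) ^ 2) - 1| < ε := by
  intro ε hε
  set ε' : ℝ := min (ε / 2) (1 / 2) with hε'def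
  have hε'pos : 0 < ε' := lt_min (by linarith) (by norm_num)
  have hε'le : ε' ≤ 1 / 2 := min_le_right _ _
  have hε'ε : ε' < ε := lt_of_le_of_lt (min_le_left _ _) (by linarith)
  refine ⟨min (ε / 8) (1 / 8), lt_min (by linarith) (by norm_num), ?_⟩
  set δ : ℝ := min (ε / 8) (1 / 8) with hδdef
  have hδpos : 0 < δ := lt_min (by linarith) (by norm_num)
  have hδ1 : δ ≤ 1 / 8 := min_le_right _ _
  have hδε' : δ ≤ ε' := min_le_min (by linarith) (by norm_num)
  have h4δ : 4 * δ ≤ ε' := le_min (by nlinarith [min_le_left (ε/8) (1/8)]) (by nlinarith [min_le_right (ε/8) (1/8)])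
  intro R R' hR hRR' hR'1 hR0
  have hR'0 : 0 < R' := lt_trans hR0 hRR'
  have hmem : ∀ r ∈ Set.uIcc R R', 0 < r ∧ r < 1 := by
    rw [Set.uIcc_of_le hRR'.le]
    intro r hr
    exact ⟨lt_of_lt_of_le hR0 hr.1, lt_of_le_of_lt hr.2 hR'1⟩
  -- continuity / integrability
  have hcont1 : ContinuousOn (fun r : ℝ => Real.log (R' / r) * (r / (1 - r ^ 2) ^ 2))
      (Set.uIcc R R') := by
    apply ContinuousOn.mul
    · apply ContinuousOn.log
      · exact continuousOn_const.div continuousOn_id (fun r hr => ne_of_gt (hmem r hr).1)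
      · intro r hr
        exact div_ne_zero (ne_of_gt hR'0) (ne_of_gt (hmem r hr).1)
    · apply ContinuousOn.div continuous_id.continuousOn
        (((continuous_const.sub (continuous_pow 2)).pow 2).continuousOn)
      intro r hr
      have h1 := (hmem r hr).1
      have h2 := (hmem r hr).2
      have : (0:ℝ) < 1 - r ^ 2 := by nlinarith
      exact pow_ne_zero 2 (ne_of_gt this)
  have hcont2 : ContinuousOn (fun r : ℝ => (R' - r) / (1 - r) ^ 2) (Set.uIcc R R') := by
    apply ContinuousOn.div
      ((continuous_const.sub continuous_id).continuousOn)
      (((continuous_const.sub continuous_id).pow 2).continuousOn)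
    intro r hr
    have h2 := (hmem r hr).2
    have : (0:ℝ) < 1 - r := by linarith
    exact pow_ne_zero 2 (ne_of_gt this)
  have hint1 : IntervalIntegrable (fun r : ℝ => Real.log (R' / r) * (r / (1 - r ^ 2) ^ 2))
      MeasureTheory.volume R R' := hcont1.intervalIntegrable
  have hint2 : IntervalIntegrable (fun r : ℝ => (R' - r) / (1 - r) ^ 2)
      MeasureTheory.volume R R' := hcont2.intervalIntegrable
  have key := second_term_sim_aux hδpos hδ1 hδε' h4δ hε'le hε'pos hR hRR' hR'1 hR0
  -- positivity of the comparison integral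
  have hHpos : 0 < ∫ r in R..R', (R' - r) / (1 - r) ^ 2 := by
    apply intervalIntegral.intervalIntegral_pos_of_pos_on hint2 _ hRR'
    intro x hx
    have h1 : (0:ℝ) < 1 - x := by
      have := hx.2; linarith
    have h2 : (0:ℝ) < R' - x := by linarith [hx.2]
    positivity
  set H : ℝ := ∫ r in R..R', (R' - r) / (1 - r) ^ 2 with hHdef
  set F : ℝ := ∫ r in R..R', Real.log (R' / r) * (r / (1 - r ^ 2) ^ 2) with hFdef
  -- integral monotonicity
  have hup : F ≤ (1 + ε') / 4 * H := by
    have h := intervalIntegral.integral_mono_on hRR'.le hint1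
      (hint2.const_mul ((1 + ε') / 4)) (fun r hr => (key r hr).2)
    rwa [intervalIntegral.integral_const_mul] at h
  have hdn : (1 - ε') / 4 * H ≤ F := by
    have h := intervalIntegral.integral_mono_on hRR'.le
      (hint2.const_mul ((1 - ε') / 4)) hint1 (fun r hr => (key r hr).1)
    rwa [intervalIntegral.integral_const_mul] at h
  have hGpos : 0 < (1 / 4 : ℝ) * H := by linarith
  have h1 : F / ((1 / 4 : ℝ) * H) ≤ 1 + ε' := (div_le_iff₀ hGpos).2 (by nlinarith)
  have h2 : 1 - ε' ≤ F / ((1 / 4 : ℝ) * H) := (le_div_iff₀ hGpos).2 (by nlinarith)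
  rw [abs_lt]
  constructor <;> linarith
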